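/- Stochastic representation of the univariate skew-normal: if T ∼ TN(0,1) on (0,∞), Y ∼ N(0,1) independent of T, and δ = λ/√(1+λ²), then X = δT + √(1−δ²) Y has density f(x) = 2φ(x)Φ(λx). -/

import Mathlib

open MeasureTheory ProbabilityTheory

noncomputable def stdNormalPDF (t : ℝ) : ℝ :=
  (Real.sqrt (2 * Real.pi))⁻¹ * Real.exp (-(t ^ 2) / 2)

noncomputable def stdNormalCDF (t : ℝ) : ℝ := ∫ y in Set.Iic t, stdNormalPDF y

/-- The truncated standard normal on (0,∞), as a measure with density 2φ(t)·1_{t>0}. -/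
noncomputable def truncStdNormal : Measure ℝ :=
  volume.withDensity fun t => ENNReal.ofReal (if 0 < t then 2 * stdNormalPDF t else 0)

open Real ENNReal Set

lemma stdNormalPDF_nonneg (t : ℝ) : 0 ≤ stdNormalPDF t := by
  unfold stdNormalPDF; positivity

lemma measurable_stdNormalPDF : Measurable stdNormalPDF := by
  unfold stdNormalPDF; fun_prop

lemma integrable_stdNormalPDF : Integrable stdNormalPDF := by
  have h : Integrable (fun x : ℝ => Real.exp (-(x ^ 2) / 2)) := by
    have := integrable_exp_neg_mul_sq (show (0:ℝ) < 1/2 by norm_num)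
    refine this.congr (Filter.Eventually.of_forall fun x => ?_)
    ring_nf
  exact h.const_mul _

lemma stdNormalPDF_neg (t : ℝ) : stdNormalPDF (-t) = stdNormalPDF t := by
  simp [stdNormalPDF]

lemma gaussianPDF_eq (y : ℝ) : gaussianPDF 0 1 y = ENNReal.ofReal (stdNormalPDF y) := by
  rw [gaussianPDF]
  congr 1
  simp [gaussianPDFReal, stdNormalPDF, neg_div]

lemma map_affine (c b : ℝ) (hc : c ≠ 0) :
    Measure.map (fun z : ℝ => c * z + b) volume = ENNReal.ofReal |c⁻¹| • volume := by
  have h : (fun z : ℝ => c * z + b) = (· + b) ∘ (c * ·) := rfl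
  rw [h, ← Measure.map_map (measurable_add_const b) (measurable_const_mul c),
    Real.map_volume_mul_left hc, Measure.map_smul,
    (measurePreserving_add_right volume b).map_eq]

lemma lintegral_affine' {c : ℝ} (hc : 0 < c) (b : ℝ) {f : ℝ → ℝ≥0∞} (hf : Measurable f) :
    ∫⁻ z, f (c * z + b) = ENNReal.ofReal c⁻¹ * ∫⁻ x, f x := by
  rw [← lintegral_map hf (by fun_prop), map_affine c b hc.ne', abs_of_pos (inv_pos.2 hc)]
  simp [lintegral_smul_measure]

lemma lintegral_affine {c : ℝ} (hc : 0 < c) (b : ℝ) {f : ℝ → ℝ≥0∞} (hf : Measurable f) :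
    ∫⁻ x, f x = ENNReal.ofReal c * ∫⁻ z, f (c * z + b) := by
  rw [lintegral_affine' hc b hf, ← mul_assoc, ← ENNReal.ofReal_mul hc.le,
    mul_inv_cancel₀ hc.ne', ENNReal.ofReal_one, one_mul]

lemma gauss_id {d c : ℝ} (hc : c ≠ 0) (h : c ^ 2 = 1 - d ^ 2) (t x : ℝ) :
    stdNormalPDF t * stdNormalPDF ((x - d * t) / c) =
      stdNormalPDF x * stdNormalPDF ((t - d * x) / c) := by
  unfold stdNormalPDF
  rw [mul_mul_mul_comm, ← Real.exp_add, mul_mul_mul_comm, ← Real.exp_add]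
  congr 1
  congr 1
  field_simp
  linear_combination (x ^ 2 - t ^ 2) * h

lemma indicator_mul_one {s : Set ℝ} (f : ℝ → ℝ≥0∞) (x : ℝ) :
    s.indicator f x = s.indicator (fun _ => (1:ℝ≥0∞)) x * f x := by
  by_cases hx : x ∈ s <;> simp [Set.indicator_apply, hx]

/-- Stochastic representation of the univariate skew-normal: if T ∼ TN(0,1) on (0,∞) and
Y ∼ N(0,1) are independent, and δ = λ/√(1+λ²), then X = δT + √(1−δ²)Y has density
2φ(x)Φ(λx): the law of X has density x ↦ 2φ(x)Φ(λx) with respect to Lebesgue measure. -/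
theorem skew_normal_stochastic_representation (lam : ℝ) :
    Measure.map
        (fun tz : ℝ × ℝ =>
          (lam / Real.sqrt (1 + lam ^ 2)) * tz.1 +
            Real.sqrt (1 - (lam / Real.sqrt (1 + lam ^ 2)) ^ 2) * tz.2)
        (truncStdNormal.prod (gaussianReal 0 1)) =
      volume.withDensity fun x => ENNReal.ofReal (2 * stdNormalPDF x * stdNormalCDF (lam * x)) := by
  set d : ℝ := lam / Real.sqrt (1 + lam ^ 2) with hd_def
  set c : ℝ := Real.sqrt (1 - d ^ 2) with hc_def
  have hs1 : (0:ℝ) < 1 + lam ^ 2 := by positivity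
  have hss : 0 < Real.sqrt (1 + lam ^ 2) := Real.sqrt_pos.2 hs1
  have hd2 : d ^ 2 = lam ^ 2 / (1 + lam ^ 2) := by
    rw [hd_def, div_pow, Real.sq_sqrt hs1.le]
  have h1d : 1 - d ^ 2 = (1 + lam ^ 2)⁻¹ := by
    rw [hd2]; field_simp; ring
  have hcpos : 0 < c := by
    rw [hc_def]; exact Real.sqrt_pos.2 (by rw [h1d]; positivity)
  have hc2 : c ^ 2 = 1 - d ^ 2 := Real.sq_sqrt (by rw [h1d]; positivity)
  have hdlc : d = lam * c := by
    have hcs : c = (Real.sqrt (1 + lam ^ 2))⁻¹ := by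
      rw [hc_def, h1d, Real.sqrt_inv]
    rw [hcs, hd_def, div_eq_mul_inv]
  have hcond : ∀ u x : ℝ, (0 < c * u + d * x ↔ -(lam * x) < u) := by
    intro u x
    rw [hdlc]
    constructor
    · intro h
      nlinarith
    · intro h
      nlinarith
  -- measurability facts
  have hg : Measurable fun t => ENNReal.ofReal (if 0 < t then 2 * stdNormalPDF t else 0) := by
    exact Measurable.ennreal_ofReal (Measurable.ite
      (measurableSet_lt measurable_const measurable_id)
      (measurable_stdNormalPDF.const_mul 2) measurable_const)
  have hF : Measurable fun tz : ℝ × ℝ => d * tz.1 + c * tz.2 := by fun_prop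
  have hν : gaussianReal 0 1 = volume.withDensity (gaussianPDF 0 1) :=
    gaussianReal_of_var_ne_zero 0 one_ne_zero
  ext s hs
  rw [Measure.map_apply hF hs, Measure.prod_apply (hF hs)]
  -- step 1 : inner gaussian measure of the section
  have step1 : ∀ t : ℝ, gaussianReal 0 1 (Prod.mk t ⁻¹' ((fun tz : ℝ × ℝ => d * tz.1 + c * tz.2) ⁻¹' s)) =
      ENNReal.ofReal c⁻¹ *
        ∫⁻ x, s.indicator (fun _ => (1:ℝ≥0∞)) x * ENNReal.ofReal (stdNormalPDF ((x - d * t) / c)) := by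
    intro t
    have hA : Prod.mk t ⁻¹' ((fun tz : ℝ × ℝ => d * tz.1 + c * tz.2) ⁻¹' s)
        = (fun z => d * t + c * z) ⁻¹' s := rfl
    have hAm : MeasurableSet ((fun z : ℝ => d * t + c * z) ⁻¹' s) := (by fun_prop : Measurable fun z : ℝ => d * t + c * z) hs
    rw [hA, hν, withDensity_apply _ hAm, ← lintegral_indicator hAm]
    have hmf : Measurable fun x => s.indicator (fun _ => (1:ℝ≥0∞)) x * ENNReal.ofReal (stdNormalPDF ((x - d * t) / c)) := by
      exact ((measurable_const.indicator hs)).mul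
        ((measurable_stdNormalPDF.comp (by fun_prop)).ennreal_ofReal)
    rw [show (∫⁻ z, ((fun z : ℝ => d * t + c * z) ⁻¹' s).indicator (gaussianPDF 0 1) z)
        = ∫⁻ z, (fun x => s.indicator (fun _ => (1:ℝ≥0∞)) x * ENNReal.ofReal (stdNormalPDF ((x - d * t) / c))) (c * z + d * t) from ?_,
      lintegral_affine' hcpos (d * t) hmf]
    refine lintegral_congr fun z => ?_
    have harg : (c * z + d * t - d * t) / c = z := by
      field_simp
      ring
    by_cases hz : d * t + c * z ∈ s
    · have hz' : c * z + d * t ∈ s := by rwa [add_comm]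
      simp [Set.indicator_apply, hz, hz', harg, gaussianPDF_eq, mul_div_cancel_left₀ _ hcpos.ne']
    · have hz' : c * z + d * t ∉ s := by rwa [add_comm]
      simp [Set.indicator_apply, hz, hz']
  -- key single-variable integral
  have hk : Measurable fun t => ENNReal.ofReal (if 0 < t then c⁻¹ * stdNormalPDF ((t - d * (0:ℝ)) / c) else 0) := by
    exact Measurable.ennreal_ofReal (Measurable.ite (measurableSet_lt measurable_const measurable_id)
      ((measurable_stdNormalPDF.comp (by fun_prop)).const_mul _) measurable_const)
  have lemC : ∀ x : ℝ,
      (∫⁻ t, ENNReal.ofReal (if 0 < t then 2 * stdNormalPDF t else 0) *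
        (ENNReal.ofReal c⁻¹ * ENNReal.ofReal (stdNormalPDF ((x - d * t) / c)))) =
      ENNReal.ofReal (2 * stdNormalPDF x * stdNormalCDF (lam * x)) := by
    intro x
    have hk' : Measurable fun t => ENNReal.ofReal (if 0 < t then c⁻¹ * stdNormalPDF ((t - d * x) / c) else 0) := by
      exact Measurable.ennreal_ofReal (Measurable.ite (measurableSet_lt measurable_const measurable_id)
        ((measurable_stdNormalPDF.comp (by fun_prop)).const_mul _) measurable_const)
    have hpt : ∀ t, ENNReal.ofReal (if 0 < t then 2 * stdNormalPDF t else 0) *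
        (ENNReal.ofReal c⁻¹ * ENNReal.ofReal (stdNormalPDF ((x - d * t) / c)))
        = ENNReal.ofReal (2 * stdNormalPDF x) *
          ENNReal.ofReal (if 0 < t then c⁻¹ * stdNormalPDF ((t - d * x) / c) else 0) := by
      intro t
      by_cases ht : 0 < t
      · rw [if_pos ht, if_pos ht,
          ← ENNReal.ofReal_mul (show (0:ℝ) ≤ c⁻¹ by positivity),
          ← ENNReal.ofReal_mul (mul_nonneg two_pos.le (stdNormalPDF_nonneg t)),
          ← ENNReal.ofReal_mul (mul_nonneg two_pos.le (stdNormalPDF_nonneg x))]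
        congr 1
        have hgid := gauss_id hcpos.ne' hc2 t x
        linear_combination (2 * c⁻¹) * hgid
      · simp [ht]
    rw [lintegral_congr hpt, lintegral_const_mul _ hk']
    have hJ : (∫⁻ t, ENNReal.ofReal (if 0 < t then c⁻¹ * stdNormalPDF ((t - d * x) / c) else 0))
        = ENNReal.ofReal (stdNormalCDF (lam * x)) := by
      rw [lintegral_affine hcpos (d * x) hk']
      have h2 : ∀ u : ℝ,
          ENNReal.ofReal (if 0 < c * u + d * x then c⁻¹ * stdNormalPDF ((c * u + d * x - d * x) / c) else 0)
          = ENNReal.ofReal c⁻¹ *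
            (Set.Ioi (-(lam * x))).indicator (fun u => ENNReal.ofReal (stdNormalPDF u)) u := by
        intro u
        have harg : (c * u + d * x - d * x) / c = u := by field_simp; ring
        rw [harg]
        by_cases hu : -(lam * x) < u
        · rw [if_pos ((hcond u x).2 hu), Set.indicator_of_mem (Set.mem_Ioi.2 hu),
            ENNReal.ofReal_mul (show (0:ℝ) ≤ c⁻¹ by positivity)]
        · rw [if_neg (fun hlt => hu ((hcond u x).1 hlt)),
            Set.indicator_of_notMem (fun h => hu (Set.mem_Ioi.1 h)),
            mul_zero, ENNReal.ofReal_zero]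
      rw [lintegral_congr h2,
        lintegral_const_mul _ ((measurable_stdNormalPDF.ennreal_ofReal).indicator measurableSet_Ioi),
        ← mul_assoc, ← ENNReal.ofReal_mul hcpos.le, mul_inv_cancel₀ hcpos.ne',
        ENNReal.ofReal_one, one_mul, lintegral_indicator measurableSet_Ioi,
        ← ofReal_integral_eq_lintegral_ofReal integrable_stdNormalPDF.restrict
          (ae_of_all _ fun u => stdNormalPDF_nonneg u)]
      congr 1
      rw [stdNormalCDF]
      calc ∫ u in Set.Ioi (-(lam * x)), stdNormalPDF u
          = ∫ u in Set.Ioi (-(lam * x)), stdNormalPDF (-u) := by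
            refine setIntegral_congr_fun measurableSet_Ioi fun u _ => (stdNormalPDF_neg u).symm
        _ = ∫ u in Set.Iic (lam * x), stdNormalPDF u := by
            simpa using integral_comp_neg_Ioi (-(lam * x)) stdNormalPDF
    rw [hJ, ← ENNReal.ofReal_mul (mul_nonneg two_pos.le (stdNormalPDF_nonneg x))]
  -- measurability helpers for reassembly
  have hEm : Measurable fun p : ℝ × ℝ => ENNReal.ofReal (stdNormalPDF ((p.2 - d * p.1) / c)) :=
    (measurable_stdNormalPDF.comp (by fun_prop)).ennreal_ofReal
  have hGm : Measurable fun p : ℝ × ℝ =>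
      s.indicator (fun _ => (1:ℝ≥0∞)) p.2 * ENNReal.ofReal (stdNormalPDF ((p.2 - d * p.1) / c)) :=
    ((measurable_const.indicator hs).comp measurable_snd).mul hEm
  have hI : Measurable fun t => ∫⁻ x,
      s.indicator (fun _ => (1:ℝ≥0∞)) x * ENNReal.ofReal (stdNormalPDF ((x - d * t) / c)) :=
    hGm.lintegral_prod_right'
  calc (∫⁻ t, gaussianReal 0 1
          (Prod.mk t ⁻¹' ((fun tz : ℝ × ℝ => d * tz.1 + c * tz.2) ⁻¹' s)) ∂truncStdNormal)
      = ∫⁻ t, ENNReal.ofReal (if 0 < t then 2 * stdNormalPDF t else 0) *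
          (ENNReal.ofReal c⁻¹ * ∫⁻ x, s.indicator (fun _ => (1:ℝ≥0∞)) x *
            ENNReal.ofReal (stdNormalPDF ((x - d * t) / c))) ∂volume := by
        rw [lintegral_congr step1, truncStdNormal,
          lintegral_withDensity_eq_lintegral_mul volume hg (hI.const_mul _)]
        simp only [Pi.mul_apply]
    _ = ∫⁻ t, ∫⁻ x, s.indicator (fun _ => (1:ℝ≥0∞)) x *
          (ENNReal.ofReal (if 0 < t then 2 * stdNormalPDF t else 0) *
            (ENNReal.ofReal c⁻¹ * ENNReal.ofReal (stdNormalPDF ((x - d * t) / c)))) ∂volume ∂volume := by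
        refine lintegral_congr fun t => ?_
        have hx1 : Measurable fun x : ℝ => s.indicator (fun _ => (1:ℝ≥0∞)) x *
            ENNReal.ofReal (stdNormalPDF ((x - d * t) / c)) :=
          (measurable_const.indicator hs).mul
            ((measurable_stdNormalPDF.comp (by fun_prop)).ennreal_ofReal)
        have hx2 : Measurable fun x : ℝ => ENNReal.ofReal c⁻¹ *
            (s.indicator (fun _ => (1:ℝ≥0∞)) x *
              ENNReal.ofReal (stdNormalPDF ((x - d * t) / c))) := hx1.const_mul _
        rw [← lintegral_const_mul _ hx1, ← lintegral_const_mul _ hx2]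
        refine lintegral_congr fun x => ?_
        ring
    _ = ∫⁻ x, ∫⁻ t, s.indicator (fun _ => (1:ℝ≥0∞)) x *
          (ENNReal.ofReal (if 0 < t then 2 * stdNormalPDF t else 0) *
            (ENNReal.ofReal c⁻¹ * ENNReal.ofReal (stdNormalPDF ((x - d * t) / c)))) ∂volume ∂volume := by
        refine lintegral_lintegral_swap ?_
        refine Measurable.aemeasurable ?_
        exact (((measurable_const.indicator hs).comp measurable_snd)).mul
          (((hg.comp measurable_fst)).mul (hEm.const_mul _))
    _ = ∫⁻ x, s.indicator (fun _ => (1:ℝ≥0∞)) x *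
          ENNReal.ofReal (2 * stdNormalPDF x * stdNormalCDF (lam * x)) ∂volume := by
        refine lintegral_congr fun x => ?_
        have ht1 : Measurable fun t : ℝ =>
            ENNReal.ofReal (if 0 < t then 2 * stdNormalPDF t else 0) *
              (ENNReal.ofReal c⁻¹ * ENNReal.ofReal (stdNormalPDF ((x - d * t) / c))) :=
          hg.mul (((measurable_stdNormalPDF.comp (by fun_prop)).ennreal_ofReal).const_mul _)
        rw [lintegral_const_mul _ ht1, lemC x]
    _ = ∫⁻ x, s.indicator (fun y => ENNReal.ofReal (2 * stdNormalPDF y * stdNormalCDF (lam * y))) x ∂volume := by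
        exact lintegral_congr fun x => (indicator_mul_one (fun y => ENNReal.ofReal (2 * stdNormalPDF y * stdNormalCDF (lam * y))) x).symm
    _ = (volume.withDensity fun y =>
          ENNReal.ofReal (2 * stdNormalPDF y * stdNormalCDF (lam * y))) s := by
        rw [lintegral_indicator hs, withDensity_apply _ hs]
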